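/- arXiv:1806.07682 — 2 statements merged into one kernel-verified Lean document; each statement's English description precedes it below -/
import Mathlib

section
/- Let A be an n×n real H-matrix, i.e. its comparison matrix M(A), defined by M(A)_{ii} = |a_{ii}| and M(A)_{ij} = −|a_{ij}| for i ≠ j, is a nonsingular M-matrix. Fix m < n and let A = T_m − E_m − F_m be the banded decomposition. Then T_m − E_m is invertible and every complex eigenvalue λ of (T_m − E_m)⁻¹ F_m satisfies |λ| < 1 (the generalized Gauss–Seidel method converges for every initial guess). -/
open Matrix Finset

lemma mapC_mul {n : ℕ} (M N : Matrix (Fin n) (Fin n) ℝ) :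
    (M * N).map Complex.ofReal = M.map Complex.ofReal * N.map Complex.ofReal := by
  ext i j
  simp only [Matrix.map_apply, Matrix.mul_apply]
  push_cast
  rfl

lemma mapC_one {n : ℕ} :
    (1 : Matrix (Fin n) (Fin n) ℝ).map Complex.ofReal = 1 := by
  ext i j
  simp only [Matrix.map_apply, Matrix.one_apply]
  split_ifs <;> simp

lemma mapC_det {n : ℕ} (M : Matrix (Fin n) (Fin n) ℝ) :
    (M.map Complex.ofReal).det = (M.det : ℂ) := by
  have h := RingHom.map_det Complex.ofRealHom M
  rw [RingHom.mapMatrix_apply] at h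
  exact h.symm

/-- Strict generalized diagonal dominance implies only the zero vector is in
the kernel (over ℂ). -/
lemma sdd_mulVec_eq_zero {n : ℕ} (B : Matrix (Fin n) (Fin n) ℂ) (u : Fin n → ℝ)
    (hu : ∀ i, 0 < u i)
    (hdom : ∀ i, ∑ j ∈ Finset.univ.erase i, ‖B i j‖ * u j
        < ‖B i i‖ * u i)
    (v : Fin n → ℂ) (hBv : B.mulVec v = 0) : v = 0 := by
  by_contra hv
  obtain ⟨k, hk⟩ : ∃ k, v k ≠ 0 := by
    by_contra h; push_neg at h; exact hv (funext h)
  obtain ⟨i, -, hi⟩ := Finset.exists_max_image Finset.univ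
    (fun j => ‖v j‖ / u j) ⟨k, Finset.mem_univ k⟩
  have hgk : 0 < ‖v k‖ / u k :=
    div_pos (by simpa using hk) (hu k)
  have hgi : 0 < ‖v i‖ / u i := lt_of_lt_of_le hgk (hi k (Finset.mem_univ k))
  set g : ℝ := ‖v i‖ / u i with hg
  have hvile : ∀ j, ‖v j‖ ≤ g * u j := by
    intro j
    have := hi j (Finset.mem_univ j)
    calc ‖v j‖ = (‖v j‖ / u j) * u j :=
          (div_mul_cancel₀ _ (hu j).ne').symm
      _ ≤ g * u j := mul_le_mul_of_nonneg_right this (le_of_lt (hu j))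
  have hvi : ‖v i‖ = g * u i := by
    rw [hg, div_mul_cancel₀ _ (hu i).ne']
  have hrow : (B.mulVec v) i = 0 := by rw [hBv]; rfl
  rw [Matrix.mulVec, dotProduct] at hrow
  have hsplit : B i i * v i = -∑ j ∈ Finset.univ.erase i, B i j * v j := by
    have h := Finset.add_sum_erase Finset.univ (fun j => B i j * v j) (Finset.mem_univ i)
    linear_combination h + hrow
  have habs : ‖B i i‖ * ‖v i‖
      ≤ ∑ j ∈ Finset.univ.erase i, ‖B i j‖ * ‖v j‖ := by
    rw [← norm_mul, hsplit, norm_neg]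
    calc ‖∑ j ∈ Finset.univ.erase i, B i j * v j‖
        ≤ ∑ j ∈ Finset.univ.erase i, ‖B i j * v j‖ :=
          norm_sum_le _ _
      _ = ∑ j ∈ Finset.univ.erase i, ‖B i j‖ * ‖v j‖ := by
          simp [_root_.map_mul]
  have hstep : ∑ j ∈ Finset.univ.erase i, ‖B i j‖ * ‖v j‖
      ≤ g * ∑ j ∈ Finset.univ.erase i, ‖B i j‖ * u j := by
    rw [Finset.mul_sum]
    refine Finset.sum_le_sum fun j _ => ?_
    calc ‖B i j‖ * ‖v j‖
        ≤ ‖B i j‖ * (g * u j) :=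
          mul_le_mul_of_nonneg_left (hvile j) (norm_nonneg _)
      _ = g * (‖B i j‖ * u j) := by ring
  have hfin : ‖B i i‖ * ‖v i‖
      < ‖B i i‖ * ‖v i‖ := by
    calc ‖B i i‖ * ‖v i‖
        ≤ g * ∑ j ∈ Finset.univ.erase i, ‖B i j‖ * u j :=
          le_trans habs hstep
      _ < g * (‖B i i‖ * u i) :=
          (mul_lt_mul_iff_right₀ hgi).mpr (hdom i)
      _ = ‖B i i‖ * ‖v i‖ := by rw [hvi]; ring
  exact lt_irrefl _ hfin

/-- Generalized Gauss–Seidel converges for H-matrices. -/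
theorem ggs_converges_of_Hmatrix (n m : ℕ) (hm : m < n)
    (A MA T E F : Matrix (Fin n) (Fin n) ℝ)
    (hMA : ∀ i j, MA i j = if i = j then |A i i| else -|A i j|)
    (hMAunit : IsUnit MA)
    (hMAinv : ∀ i j, 0 ≤ MA⁻¹ i j)
(hT : ∀ i j, T i j = if |(i : ℤ) - (j : ℤ)| ≤ (m : ℤ) then A i j else 0)
    (hE : ∀ i j, E i j = if (j : ℤ) + (m : ℤ) < (i : ℤ) then -A i j else 0)
    (hF : ∀ i j, F i j = if (i : ℤ) + (m : ℤ) < (j : ℤ) then -A i j else 0) :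
    IsUnit (T - E) ∧
      ∀ (lam : ℂ) (v : Fin n → ℂ), v ≠ 0 →
        (((T - E)⁻¹ * F).map (Complex.ofReal)).mulVec v = lam • v →
        ‖lam‖ < 1 := by
  have hMAdet : IsUnit MA.det := (Matrix.isUnit_iff_isUnit_det MA).mp hMAunit
  -- the positive vector u
  set u : Fin n → ℝ := MA⁻¹ *ᵥ (fun _ => 1) with hu_def
  have hu_eq : ∀ i, u i = ∑ j, MA⁻¹ i j := by
    intro i
    rw [hu_def]
    simp [Matrix.mulVec, dotProduct]
  have hu_nonneg : ∀ i, 0 ≤ u i := by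
    intro i
    rw [hu_eq]
    exact Finset.sum_nonneg fun j _ => hMAinv i j
  have hu : ∀ i, 0 < u i := by
    intro i
    rcases lt_or_eq_of_le (hu_nonneg i) with h | h
    · exact h
    · exfalso
      have hsum : ∑ j, MA⁻¹ i j = 0 := by rw [← hu_eq, ← h]
      have hzero : ∀ j, MA⁻¹ i j = 0 := by
        intro j
        exact (Finset.sum_eq_zero_iff_of_nonneg
          (fun k _ => hMAinv i k)).mp hsum j (Finset.mem_univ j)
      have h1 : (MA⁻¹ * MA) i i = 1 := by
        rw [Matrix.nonsing_inv_mul MA hMAdet]; simp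
      rw [Matrix.mul_apply] at h1
      simp only [hzero, zero_mul, Finset.sum_const_zero] at h1
      exact zero_ne_one h1
  -- strict diagonal dominance of A w.r.t. u
  have hdomA : ∀ i, ∑ j ∈ Finset.univ.erase i, |A i j| * u j < |A i i| * u i := by
    intro i
    have hMAu : (MA *ᵥ u) i = 1 := by
      rw [hu_def, Matrix.mulVec_mulVec, Matrix.mul_nonsing_inv MA hMAdet]
      simp [Matrix.mulVec, dotProduct, Matrix.one_apply]
    rw [Matrix.mulVec, dotProduct] at hMAu
    rw [← Finset.add_sum_erase Finset.univ (fun j => MA i j * u j)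
      (Finset.mem_univ i)] at hMAu
    have hdiag : MA i i = |A i i| := by rw [hMA]; simp
    have hoff : ∀ j ∈ Finset.univ.erase i, MA i j * u j = -(|A i j| * u j) := by
      intro j hj
      have hji : j ≠ i := Finset.ne_of_mem_erase hj
      rw [hMA]; simp [hji.symm, (by exact fun h => hji h.symm : ¬ i = j)]
    rw [Finset.sum_congr rfl hoff, Finset.sum_neg_distrib] at hMAu
    have : |A i i| * u i - ∑ j ∈ Finset.univ.erase i, |A i j| * u j = 1 := by
      rw [← hdiag]; linarith [hMAu]
    linarith
  -- entries of T - E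
  have hTE : ∀ i j, (T - E) i j = if (j : ℤ) ≤ (i : ℤ) + (m : ℤ) then A i j else 0 := by
    intro i j
    have h1 := hT i j
    have h2 := hE i j
    simp only [Matrix.sub_apply, h1, h2, abs_sub_le_iff]
    split_ifs <;> first | (exfalso; omega) | ring
  -- complex versions
  set Tc : Matrix (Fin n) (Fin n) ℂ := (T - E).map Complex.ofReal with hTc
  set Fc : Matrix (Fin n) (Fin n) ℂ := F.map Complex.ofReal with hFc
  -- dominance of Tc
  have hdomTc : ∀ i, ∑ j ∈ Finset.univ.erase i, ‖Tc i j‖ * u j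
      < ‖Tc i i‖ * u i := by
    intro i
    have hdTc : ‖Tc i i‖ = |A i i| := by
      rw [hTc]
      simp [Matrix.map_apply, hTE, Complex.norm_real, Real.norm_eq_abs]
    have hoffTc : ∀ j, ‖Tc i j‖ ≤ |A i j| := by
      intro j
      rw [hTc]
      simp only [Matrix.map_apply, Complex.norm_real, Real.norm_eq_abs, hTE]
      split_ifs <;> simp [abs_nonneg]
    calc ∑ j ∈ Finset.univ.erase i, ‖Tc i j‖ * u j
        ≤ ∑ j ∈ Finset.univ.erase i, |A i j| * u j :=
          Finset.sum_le_sum fun j _ =>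
            mul_le_mul_of_nonneg_right (hoffTc j) (le_of_lt (hu j))
      _ < |A i i| * u i := hdomA i
      _ = ‖Tc i i‖ * u i := by rw [hdTc]
  -- T - E invertible
  have hdetTE : (T - E).det ≠ 0 := by
    intro hdet
    have hdetTc : Tc.det = 0 := by
      rw [hTc, mapC_det, hdet, Complex.ofReal_zero]
    obtain ⟨v, hv, hTcv⟩ := (Matrix.exists_mulVec_eq_zero_iff).mpr hdetTc
    exact hv (sdd_mulVec_eq_zero Tc u hu hdomTc v hTcv)
  have hTEunit : IsUnit (T - E) :=
    (Matrix.isUnit_iff_isUnit_det _).mpr (isUnit_iff_ne_zero.mpr hdetTE)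
  refine ⟨hTEunit, ?_⟩
  intro lam v hv hev
  by_contra hlam
  push_neg at hlam
  have hlampos : (0 : ℝ) < ‖lam‖ := lt_of_lt_of_le one_pos hlam
  -- Fc *ᵥ v = lam • (Tc *ᵥ v)
  set Minv : Matrix (Fin n) (Fin n) ℂ := ((T - E)⁻¹).map Complex.ofReal with hMinv
  have hmap : ((T - E)⁻¹ * F).map Complex.ofReal = Minv * Fc := by
    rw [hMinv, hFc]
    exact mapC_mul _ _
  have hTcMinv : Tc * Minv = 1 := by
    rw [hTc, hMinv, ← mapC_mul,
      Matrix.mul_nonsing_inv _ ((Matrix.isUnit_iff_isUnit_det _).mp hTEunit),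
      mapC_one]
  rw [hmap] at hev
  have hFv : Fc *ᵥ v = lam • (Tc *ᵥ v) := by
    have h1 : Tc *ᵥ ((Minv * Fc) *ᵥ v) = Tc *ᵥ (lam • v) := by rw [hev]
    rw [Matrix.mulVec_mulVec, ← Matrix.mul_assoc, hTcMinv, Matrix.one_mul,
      Matrix.mulVec_smul] at h1
    exact h1
  set B : Matrix (Fin n) (Fin n) ℂ := lam • Tc - Fc with hB
  have hBv : B.mulVec v = 0 := by
    rw [hB, Matrix.sub_mulVec, Matrix.smul_mulVec, hFv]
    simp
  -- dominance of B
  have hdomB : ∀ i, ∑ j ∈ Finset.univ.erase i, ‖B i j‖ * u j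
      < ‖B i i‖ * u i := by
    intro i
    have hFii : F i i = 0 := by rw [hF]; simp
    have hBii : ‖B i i‖ = ‖lam‖ * |A i i| := by
      rw [hB]
      simp only [Matrix.sub_apply, Matrix.smul_apply, hTc, hFc, Matrix.map_apply,
        hFii, hTE]
      have : ((i : ℤ) ≤ (i : ℤ) + (m : ℤ)) := by omega
      rw [if_pos this]
      simp [smul_eq_mul, _root_.map_mul, Complex.norm_real, Real.norm_eq_abs]
    have hBoff : ∀ j, j ≠ i → ‖B i j‖ ≤ ‖lam‖ * |A i j| := by
      intro j hj
      rw [hB]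
      simp only [Matrix.sub_apply, Matrix.smul_apply, hTc, hFc, Matrix.map_apply,
        hTE, hF, smul_eq_mul]
      by_cases hcase : (j : ℤ) ≤ (i : ℤ) + (m : ℤ)
      · rw [if_pos hcase, if_neg (by omega)]
        simp [_root_.map_mul, Complex.norm_real, Real.norm_eq_abs]
      · rw [if_neg hcase, if_pos (by omega)]
        simp only [Complex.ofReal_zero, Complex.ofReal_neg, mul_zero, zero_sub,
          neg_neg, norm_neg, Complex.norm_real, Real.norm_eq_abs, abs_neg]
        calc |A i j| = 1 * |A i j| := by ring
          _ ≤ ‖lam‖ * |A i j| :=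
            mul_le_mul_of_nonneg_right hlam (abs_nonneg _)
    calc ∑ j ∈ Finset.univ.erase i, ‖B i j‖ * u j
        ≤ ∑ j ∈ Finset.univ.erase i, ‖lam‖ * |A i j| * u j :=
          Finset.sum_le_sum fun j hj =>
            mul_le_mul_of_nonneg_right (hBoff j (Finset.ne_of_mem_erase hj))
              (le_of_lt (hu j))
      _ = ‖lam‖ * ∑ j ∈ Finset.univ.erase i, |A i j| * u j := by
          rw [Finset.mul_sum]; exact Finset.sum_congr rfl fun j _ => by ring
      _ < ‖lam‖ * (|A i i| * u i) :=
          (mul_lt_mul_iff_right₀ hlampos).mpr (hdomA i)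
      _ = ‖B i i‖ * u i := by rw [hBii]; ring
  exact hv (sdd_mulVec_eq_zero B u hu hdomB v hBv)
end

section
/- Let A be an n×n nonsingular M-matrix with banded decomposition A = T_m − E_m − F_m for some m < n, and let 0 < ω ≤ 1. Then the matrix M₁ = I − ω T_m⁻¹ E_m is invertible and M₁⁻¹ is entrywise nonnegative; moreover N₁ = (1−ω)I + ω T_m⁻¹ F_m is entrywise nonnegative, so that ω T_m⁻¹ A = M₁ − N₁ is a regular splitting of ω T_m⁻¹ A. -/
open Matrix Finset

attribute [local instance] Matrix.linftyOpNormedAddCommGroup Matrix.linftyOpNormedRing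
  Matrix.linftyOpNormedAlgebra

variable {n : ℕ}

/-- entries of a product of entrywise-nonneg matrices are nonneg -/
lemma mul_entry_nonneg {A B : Matrix (Fin n) (Fin n) ℝ}
    (hA : ∀ i j, 0 ≤ A i j) (hB : ∀ i j, 0 ≤ B i j) : ∀ i j, 0 ≤ (A * B) i j := by
  intro i j
  rw [Matrix.mul_apply]
  exact Finset.sum_nonneg fun k _ => mul_nonneg (hA i k) (hB k j)

lemma pow_entry_nonneg {A : Matrix (Fin n) (Fin n) ℝ}
    (hA : ∀ i j, 0 ≤ A i j) : ∀ k i j, 0 ≤ (A ^ k) i j := by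
  intro k
  induction k with
  | zero => intro i j; simp [Matrix.one_apply]; positivity
  | succ k ih =>
      rw [pow_succ]
      exact mul_entry_nonneg ih hA

/-- the entry linear map -/
def entryLM (i j : Fin n) : Matrix (Fin n) (Fin n) ℝ →ₗ[ℝ] ℝ where
  toFun M := M i j
  map_add' _ _ := rfl
  map_smul' _ _ := rfl

/-- Neumann series lemma: nonneg matrix with norm < 1 -/
lemma neumann_nonneg (H : Matrix (Fin n) (Fin n) ℝ)
    (hH : ∀ i j, 0 ≤ H i j) (hnorm : ‖H‖ < 1) :
    IsUnit (1 - H) ∧ ∀ i j, 0 ≤ (1 - H)⁻¹ i j := by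
  refine ⟨isUnit_one_sub_of_norm_lt_one hnorm, fun i j => ?_⟩
  have hs : HasSum (fun k : ℕ => H ^ k) (Ring.inverse (1 - H)) :=
    hasSum_geom_series_inverse H hnorm
  rw [Matrix.nonsing_inv_eq_ringInverse]
  have hcont : Continuous (entryLM i j) := LinearMap.continuous_of_finiteDimensional _
  have ht : Filter.Tendsto (fun N => ∑ k ∈ Finset.range N, H ^ k) Filter.atTop
      (nhds (Ring.inverse (1 - H))) := hs.tendsto_sum_nat
  have ht2 : Filter.Tendsto (fun N => entryLM i j (∑ k ∈ Finset.range N, H ^ k)) Filter.atTop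
      (nhds (entryLM i j (Ring.inverse (1 - H)))) := (hcont.tendsto _).comp ht
  refine ge_of_tendsto ht2 ?_
  filter_upwards with N
  show 0 ≤ (∑ k ∈ Finset.range N, H ^ k) i j
  rw [Matrix.sum_apply]
  exact Finset.sum_nonneg fun k _ => pow_entry_nonneg hH k i j

/-- A Z-matrix B with Bx > 0 for some positive x is an invertible M-matrix. -/
lemma zmat_unit_inv_nonneg (B : Matrix (Fin n) (Fin n) ℝ)
    (hZ : ∀ i j, i ≠ j → B i j ≤ 0) (x : Fin n → ℝ) (hx : ∀ i, 0 < x i)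
    (hBx : ∀ i, 0 < ∑ j, B i j * x j) :
    IsUnit B ∧ ∀ i j, 0 ≤ B⁻¹ i j := by
  classical
  -- positive diagonal
  have hdiag : ∀ i, 0 < B i i := by
    intro i
    have h1 : ∑ j, B i j * x j = B i i * x i + ∑ j ∈ Finset.univ.erase i, B i j * x j :=
      (Finset.add_sum_erase _ _ (Finset.mem_univ i)).symm
    have h2 : ∑ j ∈ Finset.univ.erase i, B i j * x j ≤ 0 :=
      Finset.sum_nonpos fun j hj =>
        mul_nonpos_of_nonpos_of_nonneg (hZ i j (Ne.symm (Finset.mem_erase.1 hj).1)) (hx j).le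
    have hpos : 0 < B i i * x i := by linarith [hBx i]
    rcases mul_pos_iff.1 hpos with h | h
    · exact h.1
    · linarith [hx i]
  set a : Fin n → ℝ := fun i => (B i i * x i)⁻¹ with ha
  have hapos : ∀ i, 0 < a i := fun i => inv_pos.2 (mul_pos (hdiag i) (hx i))
  set N : Matrix (Fin n) (Fin n) ℝ := fun i j => if i = j then 0 else -B i j with hN
  have hNpos : ∀ i j, 0 ≤ N i j := by
    intro i j
    by_cases h : i = j <;> simp [hN, h]
    linarith [hZ i j h]
  set H : Matrix (Fin n) (Fin n) ℝ := diagonal a * N * diagonal x with hH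
  have hHentry : ∀ i j, H i j = a i * N i j * x j := by
    intro i j
    simp [hH, Matrix.mul_diagonal, Matrix.diagonal_mul]
  have hHpos : ∀ i j, 0 ≤ H i j := fun i j => by
    rw [hHentry]
    exact mul_nonneg (mul_nonneg (hapos i).le (hNpos i j)) (hx j).le
  -- row sums < 1
  have hrow : ∀ i, ∑ j, H i j < 1 := by
    intro i
    have hsum : ∑ j, H i j = a i * ∑ j, N i j * x j := by
      rw [Finset.mul_sum]
      exact Finset.sum_congr rfl fun j _ => by rw [hHentry]; ring
    have hNx : ∑ j, N i j * x j = B i i * x i - ∑ j, B i j * x j := by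
      have hs : ∑ j, (N i j * x j + B i j * x j) = B i i * x i := by
        rw [Finset.sum_eq_single i]
        · simp [hN]
        · intro j _ hj
          rw [hN]
          simp only [if_neg (Ne.symm hj)]
          ring
        · intro h; exact absurd (Finset.mem_univ i) h
      rw [Finset.sum_add_distrib] at hs
      linarith
    rw [hsum, hNx, mul_sub, ha]
    have h1 : (B i i * x i)⁻¹ * (B i i * x i) = 1 :=
      inv_mul_cancel₀ (mul_pos (hdiag i) (hx i)).ne'
    rw [h1]
    have : 0 < (B i i * x i)⁻¹ * ∑ j, B i j * x j :=
      mul_pos (hapos i) (hBx i)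
    linarith
  -- norm < 1
  have hnorm : ‖H‖ < 1 := by
    rw [Matrix.linfty_opNorm_def]
    rw [show (1 : ℝ) = ((1 : NNReal) : ℝ) by norm_num, NNReal.coe_lt_coe]
    rw [Finset.sup_lt_iff (by norm_num : (⊥ : NNReal) < 1)]
    intro i _
    rw [← NNReal.coe_lt_coe, NNReal.coe_sum, NNReal.coe_one]
    have : ∀ j, ((‖H i j‖₊ : ℝ)) = H i j := fun j => by
      rw [coe_nnnorm, Real.norm_of_nonneg (hHpos i j)]
    rw [Finset.sum_congr rfl fun j _ => this j]
    exact hrow i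
  obtain ⟨hu, hinv⟩ := neumann_nonneg H hHpos hnorm
  -- identity : diagonal a * B * diagonal x = 1 - H
  have key : diagonal a * B * diagonal x = 1 - H := by
    ext i j
    simp only [Matrix.sub_apply, Matrix.mul_diagonal, Matrix.diagonal_mul, hHentry,
      Matrix.one_apply]
    by_cases h : i = j
    · subst h
      rw [hN, ha]
      simp [mul_assoc, inv_mul_cancel₀ (mul_pos (hdiag i) (hx i)).ne']
      rw [← mul_assoc ((B i i)⁻¹), inv_mul_cancel₀ (hdiag i).ne', one_mul,
        inv_mul_cancel₀ (hx i).ne']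
    · rw [hN]
      simp only [if_neg h]
      ring
  have hxne : ∀ i, x i ≠ 0 := fun i => (hx i).ne'
  have hane : ∀ i, a i ≠ 0 := fun i => (hapos i).ne'
  have hua : IsUnit (diagonal a) := by
    rw [Matrix.isUnit_iff_isUnit_det, Matrix.det_diagonal, isUnit_iff_ne_zero]
    exact Finset.prod_ne_zero_iff.2 fun i _ => hane i
  have hux : IsUnit (diagonal x) := by
    rw [Matrix.isUnit_iff_isUnit_det, Matrix.det_diagonal, isUnit_iff_ne_zero]
    exact Finset.prod_ne_zero_iff.2 fun i _ => hxne i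
  have huB : IsUnit B := by
    have h1 : IsUnit (diagonal a * B * diagonal x) := key ▸ hu
    rw [Matrix.isUnit_iff_isUnit_det] at h1 hua hux ⊢
    simp only [Matrix.det_mul] at h1
    rw [isUnit_iff_ne_zero] at h1 hua hux ⊢
    intro h
    apply h1
    rw [h, mul_zero, zero_mul]
  refine ⟨huB, fun i j => ?_⟩
  have hdetH : IsUnit (1 - H).det := (Matrix.isUnit_iff_isUnit_det _).1 hu
  have hdeta : IsUnit (diagonal a).det := (Matrix.isUnit_iff_isUnit_det _).1 hua
  have h1 : (diagonal a * B) * (diagonal x * (1 - H)⁻¹) = 1 := by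
    rw [← Matrix.mul_assoc, key, Matrix.mul_nonsing_inv _ hdetH]
  have h2 : (diagonal a * B)⁻¹ = diagonal x * (1 - H)⁻¹ := Matrix.inv_eq_right_inv h1
  have h3 : B⁻¹ * (diagonal a)⁻¹ = diagonal x * (1 - H)⁻¹ := by
    rw [← Matrix.mul_inv_rev, h2]
  have h4 : B⁻¹ = diagonal x * (1 - H)⁻¹ * diagonal a := by
    have h5 := congrArg (fun M => M * diagonal a) h3
    simpa [Matrix.mul_assoc, Matrix.nonsing_inv_mul _ hdeta] using h5
  rw [h4, Matrix.mul_diagonal, Matrix.diagonal_mul]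
  exact mul_nonneg (mul_nonneg (hx i).le (hinv i j)) (hapos j).le

/-- an invertible matrix with nonneg inverse has positive row sums of its inverse -/
lemma inv_rowsum_pos (M : Matrix (Fin n) (Fin n) ℝ) (hM : IsUnit M)
    (hMn : ∀ i j, 0 ≤ M⁻¹ i j) (i : Fin n) : 0 < ∑ j, M⁻¹ i j := by
  have hdet : IsUnit M.det := (Matrix.isUnit_iff_isUnit_det M).1 hM
  have hMinvM : M⁻¹ * M = 1 := Matrix.nonsing_inv_mul M hdet
  have h0 : 0 ≤ ∑ j, M⁻¹ i j := Finset.sum_nonneg fun j _ => hMn i j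
  rcases h0.lt_or_eq with h | h
  · exact h
  · exfalso
    have hz : ∀ j, M⁻¹ i j = 0 := by
      intro j
      exact (Finset.sum_eq_zero_iff_of_nonneg (fun j _ => hMn i j)).1 h.symm j (Finset.mem_univ j)
    have h1 : (M⁻¹ * M) i i = 0 := by
      rw [Matrix.mul_apply]
      exact Finset.sum_eq_zero fun j _ => by rw [hz j, zero_mul]
    rw [hMinvM] at h1
    simp [Matrix.one_apply] at h1

/-- For a nonsingular M-matrix and 0 < ω ≤ 1, ω T_m⁻¹ A = M₁ − N₁ with
M₁ = I − ω T_m⁻¹ E_m, N₁ = (1−ω)I + ω T_m⁻¹ F_m is a regular splitting. -/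
theorem gsor_regular_splitting_of_Mmatrix (n m : ℕ) (hm : m < n)
    (A T E F : Matrix (Fin n) (Fin n) ℝ) (ω : ℝ)
    (hω0 : 0 < ω) (hω1 : ω ≤ 1)
    (hZ : ∀ i j, i ≠ j → A i j ≤ 0)
    (hA : IsUnit A)
    (hAinv : ∀ i j, 0 ≤ A⁻¹ i j)
(hT : ∀ i j, T i j = if |(i : ℤ) - (j : ℤ)| ≤ (m : ℤ) then A i j else 0)
    (hE : ∀ i j, E i j = if (j : ℤ) + (m : ℤ) < (i : ℤ) then -A i j else 0)
    (hF : ∀ i j, F i j = if (i : ℤ) + (m : ℤ) < (j : ℤ) then -A i j else 0) :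
    IsUnit (1 - ω • (T⁻¹ * E)) ∧
      (∀ i j, 0 ≤ (1 - ω • (T⁻¹ * E))⁻¹ i j) ∧
      (∀ i j, 0 ≤ ((1 - ω) • (1 : Matrix (Fin n) (Fin n) ℝ) + ω • (T⁻¹ * F)) i j) ∧
      ω • (T⁻¹ * A) =
        (1 - ω • (T⁻¹ * E)) - ((1 - ω) • (1 : Matrix (Fin n) (Fin n) ℝ) + ω • (T⁻¹ * F)) := by
  classical
  set x : Fin n → ℝ := fun i => ∑ j, A⁻¹ i j with hxdef
  have hdetA : IsUnit A.det := (Matrix.isUnit_iff_isUnit_det A).1 hA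
  have hAAinv : A * A⁻¹ = 1 := Matrix.mul_nonsing_inv A hdetA
  have hxpos : ∀ i, 0 < x i := fun i => inv_rowsum_pos A hA hAinv i
  have hAx : ∀ i, ∑ j, A i j * x j = 1 := by
    intro i
    calc ∑ j, A i j * x j = ∑ j, ∑ k, A i j * A⁻¹ j k := by
          simp_rw [hxdef, Finset.mul_sum]
      _ = ∑ k, ∑ j, A i j * A⁻¹ j k := Finset.sum_comm
      _ = ∑ k, (A * A⁻¹) i k := by simp_rw [Matrix.mul_apply]
      _ = 1 := by rw [hAAinv]; simp [Matrix.one_apply]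
  have hEpos : ∀ i j, 0 ≤ E i j := by
    intro i j
    rw [hE]
    split_ifs with h
    · have hij : i ≠ j := by
        intro hij; subst hij; omega
      linarith [hZ i j hij]
    · exact le_refl 0
  have hFpos : ∀ i j, 0 ≤ F i j := by
    intro i j
    rw [hF]
    split_ifs with h
    · have hij : i ≠ j := by
        intro hij; subst hij; omega
      linarith [hZ i j hij]
    · exact le_refl 0
  have hATEF : A = T - E - F := by
    ext i j
    simp only [Matrix.sub_apply]
    rw [hT, hE, hF]
    simp only [abs_le]
    split_ifs <;> first | ring1 | (exfalso; omega)
  have hTAEF : T = A + E + F := by rw [hATEF]; abel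
  have hTZ : ∀ i j, i ≠ j → T i j ≤ 0 := by
    intro i j hij
    rw [hT]
    split_ifs with h
    · exact hZ i j hij
    · exact le_refl 0
  have hTx : ∀ i, 0 < ∑ j, T i j * x j := by
    intro i
    have hsplit : ∑ j, T i j * x j
        = ∑ j, A i j * x j + (∑ j, E i j * x j + ∑ j, F i j * x j) := by
      rw [← Finset.sum_add_distrib, ← Finset.sum_add_distrib]
      refine Finset.sum_congr rfl fun j _ => ?_
      rw [hTAEF]
      simp only [Matrix.add_apply]
      ring
    rw [hsplit, hAx i]
    have h1 : 0 ≤ ∑ j, E i j * x j :=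
      Finset.sum_nonneg fun j _ => mul_nonneg (hEpos i j) (hxpos j).le
    have h2 : 0 ≤ ∑ j, F i j * x j :=
      Finset.sum_nonneg fun j _ => mul_nonneg (hFpos i j) (hxpos j).le
    linarith
  obtain ⟨hTu, hTinv⟩ := zmat_unit_inv_nonneg T hTZ x hxpos hTx
  have hdetT : IsUnit T.det := (Matrix.isUnit_iff_isUnit_det T).1 hTu
  have hTinvT : T⁻¹ * T = 1 := Matrix.nonsing_inv_mul T hdetT
  -- decomposition of x
  have hTE : ∀ i j, 0 ≤ (T⁻¹ * E) i j := mul_entry_nonneg hTinv hEpos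
  have hTF : ∀ i j, 0 ≤ (T⁻¹ * F) i j := mul_entry_nonneg hTinv hFpos
  have hTA1 : ∀ i, ∑ j, (T⁻¹ * A) i j * x j = ∑ k, T⁻¹ i k := by
    intro i
    calc ∑ j, (T⁻¹ * A) i j * x j = ∑ j, ∑ k, T⁻¹ i k * A k j * x j := by
          refine Finset.sum_congr rfl fun j _ => ?_
          rw [Matrix.mul_apply, Finset.sum_mul]
      _ = ∑ k, ∑ j, T⁻¹ i k * A k j * x j := Finset.sum_comm
      _ = ∑ k, T⁻¹ i k * ∑ j, A k j * x j := by
          refine Finset.sum_congr rfl fun k _ => ?_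
          rw [Finset.mul_sum]
          exact Finset.sum_congr rfl fun j _ => by ring
      _ = ∑ k, T⁻¹ i k := by
          refine Finset.sum_congr rfl fun k _ => ?_
          rw [hAx k, mul_one]
  have hxdecomp : ∀ i, x i = ∑ j, (T⁻¹ * A) i j * x j
      + (∑ j, (T⁻¹ * E) i j * x j + ∑ j, (T⁻¹ * F) i j * x j) := by
    intro i
    have h1 : x i = ∑ j, (T⁻¹ * T) i j * x j := by
      rw [hTinvT]
      simp [Matrix.one_apply]
    rw [h1, ← Finset.sum_add_distrib, ← Finset.sum_add_distrib]
    refine Finset.sum_congr rfl fun j _ => ?_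
    have : (T⁻¹ * T) i j = (T⁻¹ * A) i j + (T⁻¹ * E) i j + (T⁻¹ * F) i j := by
      rw [hTAEF, Matrix.mul_add, Matrix.mul_add]
      simp [Matrix.add_apply]
    rw [this]
    ring
  -- apply the Z-matrix lemma to M₁
  set M1 : Matrix (Fin n) (Fin n) ℝ := 1 - ω • (T⁻¹ * E) with hM1
  have hM1Z : ∀ i j, i ≠ j → M1 i j ≤ 0 := by
    intro i j hij
    simp only [hM1, Matrix.sub_apply, Matrix.smul_apply, Matrix.one_apply, if_neg hij,
      smul_eq_mul]
    have := mul_nonneg hω0.le (hTE i j)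
    linarith
  have hM1x : ∀ i, 0 < ∑ j, M1 i j * x j := by
    intro i
    have hone : ∑ j, (1 : Matrix (Fin n) (Fin n) ℝ) i j * x j = x i := by
      rw [Finset.sum_eq_single i]
      · simp [Matrix.one_apply]
      · intro j _ hj
        simp [Matrix.one_apply, Ne.symm hj]
      · intro h; exact absurd (Finset.mem_univ i) h
    have hsum : ∑ j, M1 i j * x j = x i - ω * ∑ j, (T⁻¹ * E) i j * x j := by
      rw [← hone, Finset.mul_sum, ← Finset.sum_sub_distrib]
      refine Finset.sum_congr rfl fun j _ => ?_
      simp only [hM1, Matrix.sub_apply, Matrix.smul_apply, smul_eq_mul]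
      ring
    have hg : 0 < ∑ k, T⁻¹ i k := inv_rowsum_pos T hTu hTinv i
    have he : 0 ≤ ∑ j, (T⁻¹ * E) i j * x j :=
      Finset.sum_nonneg fun j _ => mul_nonneg (hTE i j) (hxpos j).le
    have hf : 0 ≤ ∑ j, (T⁻¹ * F) i j * x j :=
      Finset.sum_nonneg fun j _ => mul_nonneg (hTF i j) (hxpos j).le
    have hd := hxdecomp i
    rw [hTA1 i] at hd
    have hω : 0 ≤ (1 - ω) * ∑ j, (T⁻¹ * E) i j * x j :=
      mul_nonneg (by linarith) he
    rw [hsum]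
    nlinarith
  obtain ⟨hM1u, hM1inv⟩ := zmat_unit_inv_nonneg M1 hM1Z x hxpos hM1x
  refine ⟨hM1u, hM1inv, ?_, ?_⟩
  · intro i j
    simp only [Matrix.add_apply, Matrix.smul_apply, Matrix.one_apply, smul_eq_mul]
    have h1 : 0 ≤ (1 - ω) * (if i = j then (1:ℝ) else 0) := by
      apply mul_nonneg (by linarith)
      split_ifs <;> norm_num
    have h2 : 0 ≤ ω * (T⁻¹ * F) i j := mul_nonneg hω0.le (hTF i j)
    linarith
  · rw [hATEF, Matrix.mul_sub, Matrix.mul_sub, hTinvT]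
    ext i j
    simp only [hM1, Matrix.smul_apply, Matrix.sub_apply, Matrix.add_apply, Matrix.one_apply,
      smul_eq_mul]
    by_cases h : i = j <;> simp only [if_pos, if_neg, h] <;> ring1
end
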